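/- The cosine of the dihedral angle A of a tetrahedron along edge OA is determined by the areas via cos A = (Δ₂² + Δ₃² − 4L²)/(2Δ₂Δ₃), where L is the area of the medial parallelogram for the edge pair (OA, BC). -/

import Mathlib

open RealInnerProductSpace

noncomputable def cross3 (u v : EuclideanSpace ℝ (Fin 3)) : EuclideanSpace ℝ (Fin 3) :=
  (WithLp.equiv 2 (Fin 3 → ℝ)).symm
    ![u 1 * v 2 - u 2 * v 1, u 2 * v 0 - u 0 * v 2, u 0 * v 1 - u 1 * v 0]

lemma cross3_eq (u v : EuclideanSpace ℝ (Fin 3)) :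
    cross3 u v = (WithLp.equiv 2 (Fin 3 → ℝ)).symm
      (crossProduct (WithLp.equiv 2 (Fin 3 → ℝ) u) (WithLp.equiv 2 (Fin 3 → ℝ) v)) := by
  rfl

lemma cross3_ne_zero {u v : EuclideanSpace ℝ (Fin 3)}
    (h : LinearIndependent ℝ ![(WithLp.equiv 2 (Fin 3 → ℝ) u), (WithLp.equiv 2 (Fin 3 → ℝ) v)]) :
    cross3 u v ≠ 0 := by
  rw [cross3_eq]
  intro hz
  exact (crossProduct_ne_zero_iff_linearIndependent.2 h)
    (by simpa using hz)

lemma cross3_sub (u v w : EuclideanSpace ℝ (Fin 3)) :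
    cross3 u (v - w) = cross3 u v - cross3 u w := by
  ext i
  fin_cases i <;> simp [cross3] <;> ring

lemma cross3_swap (u v : EuclideanSpace ℝ (Fin 3)) :
    cross3 u v = - cross3 v u := by
  ext i
  fin_cases i <;> simp [cross3] <;> ring

lemma li_CA (O A B C : EuclideanSpace ℝ (Fin 3)) (h : AffineIndependent ℝ ![O, A, B, C]) :
    LinearIndependent ℝ
      ![(WithLp.equiv 2 (Fin 3 → ℝ)) (C - O), (WithLp.equiv 2 (Fin 3 → ℝ)) (A - O)] := by
  rw [LinearIndependent.pair_iff]
  intro s t hst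
  have hst' : s • (C - O) + t • (A - O) = (0 : EuclideanSpace ℝ (Fin 3)) :=
    (WithLp.equiv 2 (Fin 3 → ℝ)).injective (by simpa using hst)
  have key := affineIndependent_iff.1 h Finset.univ ![-s - t, t, 0, s]
    (by simp [Fin.sum_univ_four])
    (by
      have : ∑ e : Fin 4, ![-s - t, t, 0, s] e • ![O, A, B, C] e
          = s • (C - O) + t • (A - O) := by
        simp [Fin.sum_univ_four]
        module
      rw [this, hst'])
  exact ⟨by simpa using key 3 (by simp), by simpa using key 1 (by simp)⟩

lemma li_AB (O A B C : EuclideanSpace ℝ (Fin 3)) (h : AffineIndependent ℝ ![O, A, B, C]) :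
    LinearIndependent ℝ
      ![(WithLp.equiv 2 (Fin 3 → ℝ)) (A - O), (WithLp.equiv 2 (Fin 3 → ℝ)) (B - O)] := by
  rw [LinearIndependent.pair_iff]
  intro s t hst
  have hst' : s • (A - O) + t • (B - O) = (0 : EuclideanSpace ℝ (Fin 3)) :=
    (WithLp.equiv 2 (Fin 3 → ℝ)).injective (by simpa using hst)
  have key := affineIndependent_iff.1 h Finset.univ ![-s - t, s, t, 0]
    (by simp [Fin.sum_univ_four]; ring)
    (by
      have : ∑ e : Fin 4, ![-s - t, s, t, 0] e • ![O, A, B, C] e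
          = s • (A - O) + t • (B - O) := by
        simp [Fin.sum_univ_four]
        module
      rw [this, hst'])
  exact ⟨by simpa using key 1 (by simp), by simpa using key 2 (by simp)⟩

theorem cos_dihedral_from_areas (O A B C : EuclideanSpace ℝ (Fin 3))
    (h : AffineIndependent ℝ ![O, A, B, C]) (Δ₂ Δ₃ L dihA : ℝ)
    (hΔ₂ : Δ₂ = ‖cross3 (C - O) (A - O)‖ / 2)
    (hΔ₃ : Δ₃ = ‖cross3 (A - O) (B - O)‖ / 2)
    (hL : L = ‖cross3 (A - O) (C - B)‖ / 4)
    (hA : Real.cos dihA =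
      -(⟪cross3 (C - O) (A - O), cross3 (A - O) (B - O)⟫ /
        (‖cross3 (C - O) (A - O)‖ * ‖cross3 (A - O) (B - O)‖))) :
    Real.cos dihA = (Δ₂^2 + Δ₃^2 - 4 * L^2) / (2 * Δ₂ * Δ₃) := by
  set n₂ := cross3 (C - O) (A - O) with hn₂
  set n₃ := cross3 (A - O) (B - O) with hn₃
  have hx : ‖n₂‖ ≠ 0 := norm_ne_zero_iff.2 (cross3_ne_zero (li_CA O A B C h))
  have hy : ‖n₃‖ ≠ 0 := norm_ne_zero_iff.2 (cross3_ne_zero (li_AB O A B C h))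
  have hcb : C - B = (C - O) - (B - O) := by abel
  have hkey : cross3 (A - O) (C - B) = -(n₂ + n₃) := by
    rw [hcb, cross3_sub, hn₂, hn₃, cross3_swap (A - O) (C - O)]
    abel
  have hnorm : ‖cross3 (A - O) (C - B)‖ ^ 2 = ‖n₂‖ ^ 2 + 2 * ⟪n₂, n₃⟫ + ‖n₃‖ ^ 2 := by
    rw [hkey, norm_neg]
    exact norm_add_sq_real n₂ n₃
  rw [hA, hΔ₂, hΔ₃, hL]
  set x := ‖n₂‖ with hxd
  set y := ‖n₃‖ with hyd
  set N := ‖cross3 (A - O) (C - B)‖ with hNd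
  set p := (⟪n₂, n₃⟫ : ℝ) with hpd
  field_simp
  linear_combination (4:ℝ) * hnorm
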